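/- If λ : A → B is an epimorphism in the category of commutative rings, then the induced map Spec B → Spec A on prime spectra (sending a prime q to its preimage λ⁻¹(q)) is injective. -/

import Mathlib

set_option maxHeartbeats 1000000
set_option synthInstance.maxHeartbeats 400000

open TensorProduct

/-- If `λ : A → B` is an epimorphism in the category of commutative rings, then the induced
map `Spec B → Spec A` on prime spectra is injective. -/
theorem statement1 {A B : Type} [CommRing A] [CommRing B] (lam : A →+* B)
    (hepi : ∀ (C : Type) [CommRing C] (f g : B →+* C), f.comp lam = g.comp lam → f = g) :
    Function.Injective (PrimeSpectrum.comap lam) := by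
  intro q1 q2 h
  have hq1 : q1.asIdeal.IsPrime := q1.isPrime
  have hq2 : q2.asIdeal.IsPrime := q2.isPrime
  set p : Ideal A := q1.asIdeal.comap lam with hp
  have hp2 : q2.asIdeal.comap lam = p := congrArg PrimeSpectrum.asIdeal h.symm
  haveI : p.IsPrime := Ideal.IsPrime.comap lam
  -- residue fields of q1, q2
  let K1 := FractionRing (B ⧸ q1.asIdeal)
  let K2 := FractionRing (B ⧸ q2.asIdeal)
  let f1 : B →+* K1 := (algebraMap (B ⧸ q1.asIdeal) K1).comp (Ideal.Quotient.mk q1.asIdeal)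
  let f2 : B →+* K2 := (algebraMap (B ⧸ q2.asIdeal) K2).comp (Ideal.Quotient.mk q2.asIdeal)
  have hker1 : RingHom.ker f1 = q1.asIdeal := by
    ext b
    simp only [RingHom.mem_ker, RingHom.comp_apply, f1]
    rw [← map_zero (algebraMap (B ⧸ q1.asIdeal) K1)]
    rw [(IsFractionRing.injective (B ⧸ q1.asIdeal) K1).eq_iff]
    exact Ideal.Quotient.eq_zero_iff_mem
  have hker2 : RingHom.ker f2 = q2.asIdeal := by
    ext b
    simp only [RingHom.mem_ker, RingHom.comp_apply, f2]
    rw [← map_zero (algebraMap (B ⧸ q2.asIdeal) K2)]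
    rw [(IsFractionRing.injective (B ⧸ q2.asIdeal) K2).eq_iff]
    exact Ideal.Quotient.eq_zero_iff_mem
  -- the residue field of p
  let F := FractionRing (A ⧸ p)
  -- maps A ⧸ p →+* K_i
  have hg1 : ∀ a ∈ p, (f1.comp lam) a = 0 := by
    intro a ha
    have : lam a ∈ RingHom.ker f1 := by rw [hker1]; exact ha
    simpa using this
  have hg2 : ∀ a ∈ p, (f2.comp lam) a = 0 := by
    intro a ha
    have ha2 : a ∈ q2.asIdeal.comap lam := by rw [hp2]; exact ha
    have : lam a ∈ RingHom.ker f2 := by rw [hker2]; exact ha2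
    simpa using this
  let g1 : A ⧸ p →+* K1 := Ideal.Quotient.lift p (f1.comp lam) hg1
  let g2 : A ⧸ p →+* K2 := Ideal.Quotient.lift p (f2.comp lam) hg2
  have hg1inj : Function.Injective g1 := by
    rw [RingHom.injective_iff_ker_eq_bot, eq_bot_iff]
    intro x hx
    obtain ⟨a, rfl⟩ := Ideal.Quotient.mk_surjective x
    have : f1 (lam a) = 0 := hx
    have : lam a ∈ RingHom.ker f1 := this
    rw [hker1] at this
    simpa [Ideal.Quotient.eq_zero_iff_mem] using (show a ∈ p from this)
  have hg2inj : Function.Injective g2 := by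
    rw [RingHom.injective_iff_ker_eq_bot, eq_bot_iff]
    intro x hx
    obtain ⟨a, rfl⟩ := Ideal.Quotient.mk_surjective x
    have : f2 (lam a) = 0 := hx
    have : lam a ∈ RingHom.ker f2 := this
    rw [hker2] at this
    have : a ∈ p := by rw [← hp2]; exact this
    simpa [Ideal.Quotient.eq_zero_iff_mem] using this
  -- lift to F →+* K_i
  have hu1 : ∀ x : nonZeroDivisors (A ⧸ p), IsUnit (g1 x) := by
    intro x
    refine isUnit_iff_ne_zero.mpr ?_
    intro hx0
    have : (x : A ⧸ p) = 0 := hg1inj (by simpa using hx0)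
    exact nonZeroDivisors.ne_zero x.2 this
  have hu2 : ∀ x : nonZeroDivisors (A ⧸ p), IsUnit (g2 x) := by
    intro x
    refine isUnit_iff_ne_zero.mpr ?_
    intro hx0
    have : (x : A ⧸ p) = 0 := hg2inj (by simpa using hx0)
    exact nonZeroDivisors.ne_zero x.2 this
  let G1 : F →+* K1 := IsLocalization.lift (M := nonZeroDivisors (A ⧸ p)) hu1
  let G2 : F →+* K2 := IsLocalization.lift (M := nonZeroDivisors (A ⧸ p)) hu2
  letI : Algebra F K1 := G1.toAlgebra
  letI : Algebra F K2 := G2.toAlgebra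
  -- the tensor product
  let C := K1 ⊗[F] K2
  haveI : Nontrivial C := inferInstance
  let h1 : B →+* C := (Algebra.TensorProduct.includeLeft (S := F)).toRingHom.comp f1
  let h2 : B →+* C := (Algebra.TensorProduct.includeRight).toRingHom.comp f2
  have hcomp : h1.comp lam = h2.comp lam := by
    ext a
    have e1 : f1 (lam a) = algebraMap F K1 (algebraMap (A ⧸ p) F (Ideal.Quotient.mk p a)) := by
      show f1 (lam a) = G1 (algebraMap (A ⧸ p) F (Ideal.Quotient.mk p a))
      rw [IsLocalization.lift_eq]
      rfl
    have e2 : f2 (lam a) = algebraMap F K2 (algebraMap (A ⧸ p) F (Ideal.Quotient.mk p a)) := by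
      show f2 (lam a) = G2 (algebraMap (A ⧸ p) F (Ideal.Quotient.mk p a))
      rw [IsLocalization.lift_eq]
      rfl
    show Algebra.TensorProduct.includeLeft (S := F) (f1 (lam a))
        = Algebra.TensorProduct.includeRight (f2 (lam a))
    rw [e1, e2, AlgHom.commutes, AlgHom.commutes]
  have hfg : h1 = h2 := hepi C h1 h2 hcomp
  -- conclude
  have hinj1 : Function.Injective (Algebra.TensorProduct.includeLeft
      (R := F) (S := F) (A := K1) (B := K2)).toRingHom :=
    (Algebra.TensorProduct.includeLeft (R := F) (S := F) (A := K1)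
      (B := K2)).toRingHom.injective
  have hinj2 : Function.Injective (Algebra.TensorProduct.includeRight
      (R := F) (A := K1) (B := K2)).toRingHom :=
    (Algebra.TensorProduct.includeRight (R := F) (A := K1)
      (B := K2)).toRingHom.injective
  have hk1 : RingHom.ker h1 = q1.asIdeal := by
    ext b
    constructor
    · intro hb
      have hf : f1 b = 0 := by
        have := hinj1 (a₁ := f1 b) (a₂ := 0) (by rw [map_zero]; exact hb)
        simpa using this
      exact (SetLike.ext_iff.mp hker1 b).mp hf
    · intro hb
      have hf : f1 b = 0 := (SetLike.ext_iff.mp hker1 b).mpr hb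
      show h1 b = 0
      have : h1 b = (Algebra.TensorProduct.includeLeft (R := F) (S := F) (A := K1)
        (B := K2)).toRingHom (f1 b) := rfl
      rw [this, hf]; simp
  have hk2 : RingHom.ker h2 = q2.asIdeal := by
    ext b
    constructor
    · intro hb
      have hf : f2 b = 0 := by
        have := hinj2 (a₁ := f2 b) (a₂ := 0) (by rw [map_zero]; exact hb)
        simpa using this
      exact (SetLike.ext_iff.mp hker2 b).mp hf
    · intro hb
      have hf : f2 b = 0 := (SetLike.ext_iff.mp hker2 b).mpr hb
      show h2 b = 0
      have : h2 b = (Algebra.TensorProduct.includeRight (R := F) (A := K1)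
        (B := K2)).toRingHom (f2 b) := rfl
      rw [this, hf]; simp
  apply PrimeSpectrum.ext
  calc q1.asIdeal = RingHom.ker h1 := hk1.symm
    _ = RingHom.ker h2 := by rw [hfg]
    _ = q2.asIdeal := hk2
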